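/- Let A be densely defined and closed with A*A ≥ εI for some ε > 0 and R ∈ B(H). If λ₁ ≠ 0 is an eigenvalue of Q + S = ((-iR, A*),(A, 0)) with eigenvector (ψ₁, ψ₂), then ψ₂ ∈ ran(A), and writing u = i A⁻¹|_{ran(A)} ψ₂, the vector (u, ψ₁) lies in dom(A*A) ⊕ dom(A) and is an eigenvector of iG_{A,R} with eigenvalue λ₁. -/

import Mathlib

/-- Let `A` be densely defined and closed with `A*A ≥ εI` for some
`ε > 0` (so that `ker(A) = {0}` and `A : dom(A) → ran(A)` is a bijection) and
`R ∈ B(H)`.  If `λ₁ ≠ 0` is an eigenvalue of `Q + S = ((-iR, A*), (A, 0))` with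
eigenvector `(ψ₁, ψ₂)`, then `ψ₂ ∈ ran(A)`, i.e. `ψ₂ = A w` for a (unique) `w ∈ dom(A)`,
and the vector `(u, ψ₁)` with `u = i A⁻¹|_{ran(A)} ψ₂ = i • w` lies in
`dom(A*A) ⊕ dom(A)` and is an eigenvector of `iG_{A,R}` with eigenvalue `λ₁`. -/
theorem stmt_3 {H : Type*} [NormedAddCommGroup H] [InnerProductSpace ℂ H] [CompleteSpace H]
    (domA domAs : Submodule ℂ H) (A As : H →ₗ[ℂ] H) (R : H →L[ℂ] H)
    (hdense : Dense (domA : Set H))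
    (hclosed : IsClosed {p : H × H | p.1 ∈ domA ∧ p.2 = A p.1})
    (hadj : ∀ u ∈ domA, ∀ v ∈ domAs, (inner ℂ (As v) u : ℂ) = inner ℂ v (A u))
    (ε : ℝ) (hε : 0 < ε)
    (hcoer : ∀ u ∈ domA, ε * ‖u‖ ^ 2 ≤ ‖A u‖ ^ 2)
    (lam1 : ℂ) (hlam1 : lam1 ≠ 0)
    (ψ₁ ψ₂ : H) (hψ₁ : ψ₁ ∈ domA) (hψ₂ : ψ₂ ∈ domAs)
    (hne : ¬(ψ₁ = 0 ∧ ψ₂ = 0))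
    (heig1 : (-Complex.I) • R ψ₁ + As ψ₂ = lam1 • ψ₁)
    (heig2 : A ψ₁ = lam1 • ψ₂) :
    ∃ w : H, w ∈ domA ∧ A w = ψ₂ ∧
      -- u = i•w ∈ dom(A*A) :
      Complex.I • w ∈ domA ∧ A (Complex.I • w) ∈ domAs ∧
      ¬(Complex.I • w = 0 ∧ ψ₁ = 0) ∧
      -- iG_{A,R} (u, ψ₁) = λ₁ (u, ψ₁) :
      Complex.I • ψ₁ = lam1 • (Complex.I • w) ∧
      Complex.I • (-(As (A (Complex.I • w))) - R ψ₁) = lam1 • ψ₁ := by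
  refine ⟨lam1⁻¹ • ψ₁, domA.smul_mem _ hψ₁, ?_, domA.smul_mem _ (domA.smul_mem _ hψ₁), ?_, ?_, ?_, ?_⟩
  · rw [map_smul, heig2, smul_smul, inv_mul_cancel₀ hlam1, one_smul]
  · rw [map_smul, map_smul, heig2]
    exact domAs.smul_mem _ (domAs.smul_mem _ (domAs.smul_mem _ hψ₂))
  · rintro ⟨-, h1⟩
    apply hne
    refine ⟨h1, ?_⟩
    have := heig2
    rw [h1, map_zero] at this
    exact (smul_eq_zero.mp this.symm).resolve_left hlam1 |>.symm ▸ rfl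
  · rw [smul_smul, smul_smul, mul_comm lam1, mul_assoc, mul_inv_cancel₀ hlam1, mul_one]
  · have hA : A (Complex.I • (lam1⁻¹ • ψ₁)) = Complex.I • ψ₂ := by
      rw [map_smul, map_smul, heig2, smul_smul, smul_smul, mul_assoc,
        inv_mul_cancel₀ hlam1, mul_one]
    rw [hA, map_smul, smul_sub, ← heig1, smul_neg, smul_smul,
      Complex.I_mul_I, neg_one_smul, neg_neg, neg_smul]
    abel
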